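/- arXiv:1007.1484 — 2 statements merged into one kernel-verified Lean document; each statement's English description precedes it below -/
import Mathlib

section
/- Let G be a finite directed flow network with nonnegative real edge capacities, and let P, Q, R be a partition of a set of designated terminal vertices into three disjoint subsets. Denote by (S ↛ T) the minimum capacity of an edge cut with all of S on the source side and all of T on the sink side. Then (P ↛ Q∪R) ≤ (P∪Q ↛ R) + (P∪R ↛ Q). -/
open Finset

/-- Capacity of the cut determined by vertex set `A`: total capacity of edges leaving `A`. -/
def cutCap {V : Type} [Fintype V] [DecidableEq V] (c : V → V → ℝ) (A : Finset V) : ℝ :=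
  ∑ u ∈ A, ∑ v ∈ Aᶜ, c u v

/-- Minimum capacity of a cut with all of `S` on the source side and all of `T` on the sink side. -/
noncomputable def minCut {V : Type} [Fintype V] [DecidableEq V] (c : V → V → ℝ) (S T : Finset V) : ℝ :=
  sInf {x : ℝ | ∃ A : Finset V, S ⊆ A ∧ Disjoint T A ∧ x = cutCap c A}

/-- Net outflow of `f` at vertex `v`. -/
def netOut {V : Type} [Fintype V] (f : V → V → ℝ) (v : V) : ℝ :=
  (∑ w, f v w) - ∑ w, f w v

/-- `f` is an external flow in the network with capacities `c`, terminals `q` and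
terminal net-outflow values `x`. -/
def IsExtFlow {V : Type} [Fintype V] {k : ℕ} (c f : V → V → ℝ) (q : Fin k → V)
    (x : Fin k → ℝ) : Prop :=
  (∀ u v, 0 ≤ f u v ∧ f u v ≤ c u v) ∧
  (∀ v, (∀ i, q i ≠ v) → netOut f v = 0) ∧
  (∀ i, netOut f (q i) = x i)

lemma cutCap_eq {V : Type} [Fintype V] [DecidableEq V] (c : V → V → ℝ) (A : Finset V) :
    cutCap c A = ∑ u, ∑ v, (if u ∈ A ∧ v ∉ A then c u v else 0) := by
  unfold cutCap
  have h1 : ∀ u : V, (∑ v, if u ∈ A ∧ v ∉ A then c u v else 0)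
      = if u ∈ A then ∑ v ∈ Aᶜ, c u v else 0 := by
    intro u
    by_cases hu : u ∈ A
    · simp only [hu, true_and, if_true]
      rw [show (∑ v ∈ Aᶜ, c u v) = ∑ v ∈ Finset.univ ∩ Aᶜ, c u v by rw [Finset.univ_inter],
        ← Finset.sum_ite_mem Finset.univ Aᶜ (c u)]
      simp [Finset.mem_compl]
    · simp [hu]
  rw [Finset.sum_congr rfl (fun u _ => h1 u), Finset.sum_ite_mem, Finset.univ_inter]

lemma cutCap_nonneg {V : Type} [Fintype V] [DecidableEq V] (c : V → V → ℝ)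
    (hc : ∀ u v, 0 ≤ c u v) (A : Finset V) : 0 ≤ cutCap c A :=
  Finset.sum_nonneg fun u _ => Finset.sum_nonneg fun v _ => hc u v

lemma cutCap_submodular {V : Type} [Fintype V] [DecidableEq V] (c : V → V → ℝ)
    (hc : ∀ u v, 0 ≤ c u v) (A B : Finset V) :
    cutCap c (A ∩ B) + cutCap c (A ∪ B) ≤ cutCap c A + cutCap c B := by
  simp only [cutCap_eq, ← Finset.sum_add_distrib]
  apply Finset.sum_le_sum
  intro u _
  apply Finset.sum_le_sum
  intro v _
  have := hc u v
  by_cases ha : u ∈ A <;> by_cases hb : u ∈ B <;> by_cases ha' : v ∈ A <;>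
    by_cases hb' : v ∈ B <;>
    simp [ha, hb, ha', hb', Finset.mem_inter, Finset.mem_union] <;> linarith

lemma minCut_exists {V : Type} [Fintype V] [DecidableEq V] (c : V → V → ℝ)
    (S T : Finset V) (hST : Disjoint S T) :
    ∃ A : Finset V, S ⊆ A ∧ Disjoint T A ∧ minCut c S T = cutCap c A := by
  have hne : {x : ℝ | ∃ A : Finset V, S ⊆ A ∧ Disjoint T A ∧ x = cutCap c A}.Nonempty := by
    refine ⟨cutCap c Tᶜ, Tᶜ, ?_, ?_, rfl⟩
    · intro x hx
      simp only [Finset.mem_compl]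
      exact fun hxT => Finset.disjoint_left.mp hST hx hxT
    · exact disjoint_compl_right
  have hfin : {x : ℝ | ∃ A : Finset V, S ⊆ A ∧ Disjoint T A ∧ x = cutCap c A}.Finite :=
    (Set.finite_range (cutCap c)).subset (fun x ⟨A, _, _, hx⟩ => ⟨A, hx.symm⟩)
  obtain ⟨A, h1, h2, h3⟩ := hne.csInf_mem hfin
  exact ⟨A, h1, h2, h3⟩

theorem stmt0 {V : Type} [Fintype V] [DecidableEq V] (c : V → V → ℝ)
    (hc : ∀ u v, 0 ≤ c u v) (P Q R : Finset V)
    (hPQ : Disjoint P Q) (hPR : Disjoint P R) (hQR : Disjoint Q R) :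
    minCut c P (Q ∪ R) ≤ minCut c (P ∪ Q) R + minCut c (P ∪ R) Q := by
  obtain ⟨A, hA1, hA2, hA3⟩ := minCut_exists c (P ∪ Q) R
    (Finset.disjoint_union_left.mpr ⟨hPR, hQR⟩)
  obtain ⟨B, hB1, hB2, hB3⟩ := minCut_exists c (P ∪ R) Q
    (Finset.disjoint_union_left.mpr ⟨hPQ, hQR.symm⟩)
  have hle : minCut c P (Q ∪ R) ≤ cutCap c (A ∩ B) := by
    apply csInf_le
    · exact ⟨0, fun x ⟨C, _, _, hx⟩ => hx ▸ cutCap_nonneg c hc C⟩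
    · refine ⟨A ∩ B, Finset.subset_inter (Finset.subset_union_left.trans hA1)
        (Finset.subset_union_left.trans hB1), ?_, rfl⟩
      exact Finset.disjoint_union_left.mpr
        ⟨hB2.mono_right Finset.inter_subset_right, hA2.mono_right Finset.inter_subset_left⟩
  have hsub := cutCap_submodular c hc A B
  have hun := cutCap_nonneg c hc (A ∪ B)
  rw [hA3, hB3]
  linarith
end

section
/- In an undirected flow network with three terminals a, b, c, the triangle network on vertices {a,b,c} with undirected edge capacities c(ab) = ½((a ↛ bc) + (b ↛ ac) − (c ↛ ab)), c(ac) = ½((a ↛ bc) + (c ↛ ab) − (b ↛ ac)), c(bc) = ½((b ↛ ac) + (c ↛ ab) − (a ↛ bc)) has, for each terminal q, minimum cut value separating q from the other two terminals equal to (q ↛ {a,b,c}∖{q}) in the original network, provided all three prescribed capacities are nonnegative. -/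
open Finset

/-- The triangle network on vertices `a=0, b=1, c=2` with symmetric (undirected)
edge capacities `p = c(ab)`, `q = c(ac)`, `r = c(bc)`. -/
def triCap (p q r : ℝ) (u v : Fin 3) : ℝ :=
  if (u = 0 ∧ v = 1) ∨ (u = 1 ∧ v = 0) then p
  else if (u = 0 ∧ v = 2) ∨ (u = 2 ∧ v = 0) then q
  else if (u = 1 ∧ v = 2) ∨ (u = 2 ∧ v = 1) then r
  else 0


lemma minCut_tri (cc : Fin 3 → Fin 3 → ℝ) (s : Fin 3) (T : Finset (Fin 3))
    (hT : T = ({s} : Finset (Fin 3))ᶜ) :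
    minCut cc {s} T = cutCap cc {s} := by
  have hset : {x : ℝ | ∃ A : Finset (Fin 3), {s} ⊆ A ∧ Disjoint T A ∧ x = cutCap cc A}
      = {cutCap cc {s}} := by
    ext x
    constructor
    · rintro ⟨A, hsub, hdis, rfl⟩
      have hA : A = {s} := by
        apply Finset.Subset.antisymm
        · intro v hv
          by_contra hvs
          have hvT : v ∈ T := by
            rw [hT, Finset.mem_compl]
            simpa using hvs
          exact (Finset.disjoint_left.mp hdis hvT) hv
        · exact hsub
      simp [hA]
    · rintro rfl
      exact ⟨{s}, Finset.Subset.refl _, by rw [hT]; exact disjoint_compl_left, rfl⟩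
  rw [minCut, hset, csInf_singleton]

theorem stmt9 {V : Type} [Fintype V] [DecidableEq V] (c : V → V → ℝ)
    (hsymm : ∀ u v, c u v = c v u) (hc : ∀ u v, 0 ≤ c u v)
    (a b d : V) (hab : a ≠ b) (had : a ≠ d) (hbd : b ≠ d)
    (hp : 0 ≤ (minCut c {a} {b, d} + minCut c {b} {a, d} - minCut c {d} {a, b}) / 2)
    (hq : 0 ≤ (minCut c {a} {b, d} + minCut c {d} {a, b} - minCut c {b} {a, d}) / 2)
    (hr : 0 ≤ (minCut c {b} {a, d} + minCut c {d} {a, b} - minCut c {a} {b, d}) / 2) :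
    minCut
        (triCap ((minCut c {a} {b, d} + minCut c {b} {a, d} - minCut c {d} {a, b}) / 2)
                ((minCut c {a} {b, d} + minCut c {d} {a, b} - minCut c {b} {a, d}) / 2)
                ((minCut c {b} {a, d} + minCut c {d} {a, b} - minCut c {a} {b, d}) / 2))
        {(0 : Fin 3)} {1, 2} = minCut c {a} {b, d} ∧
    minCut
        (triCap ((minCut c {a} {b, d} + minCut c {b} {a, d} - minCut c {d} {a, b}) / 2)
                ((minCut c {a} {b, d} + minCut c {d} {a, b} - minCut c {b} {a, d}) / 2)
                ((minCut c {b} {a, d} + minCut c {d} {a, b} - minCut c {a} {b, d}) / 2))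
        {(1 : Fin 3)} {0, 2} = minCut c {b} {a, d} ∧
    minCut
        (triCap ((minCut c {a} {b, d} + minCut c {b} {a, d} - minCut c {d} {a, b}) / 2)
                ((minCut c {a} {b, d} + minCut c {d} {a, b} - minCut c {b} {a, d}) / 2)
                ((minCut c {b} {a, d} + minCut c {d} {a, b} - minCut c {a} {b, d}) / 2))
        {(2 : Fin 3)} {0, 1} = minCut c {d} {a, b} := by
  
  set α := minCut c {a} {b, d}
  set β := minCut c {b} {a, d}
  set γ := minCut c {d} {a, b}
  refine ⟨?_, ?_, ?_⟩
  · rw [minCut_tri _ 0 _ (by decide)]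
    simp [cutCap, triCap, Finset.sum_ite, show ({0} : Finset (Fin 3))ᶜ = {1, 2} by decide]
    norm_num [Finset.filter_insert, Finset.filter_singleton, show (2:Fin 3) ≠ 1 from by decide, show (2:Fin 3) ≠ 0 from by decide, show (1:Fin 3) ≠ 0 from by decide]
    ring
  · rw [minCut_tri _ 1 _ (by decide)]
    simp [cutCap, triCap, Finset.sum_ite, show ({1} : Finset (Fin 3))ᶜ = {0, 2} by decide]
    norm_num [Finset.filter_insert, Finset.filter_singleton, show (2:Fin 3) ≠ 1 from by decide, show (2:Fin 3) ≠ 0 from by decide, show (1:Fin 3) ≠ 0 from by decide]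
    ring
  · rw [minCut_tri _ 2 _ (by decide)]
    simp [cutCap, triCap, Finset.sum_ite, show ({2} : Finset (Fin 3))ᶜ = {0, 1} by decide]
    norm_num [Finset.filter_insert, Finset.filter_singleton, show (2:Fin 3) ≠ 1 from by decide, show (2:Fin 3) ≠ 0 from by decide, show (1:Fin 3) ≠ 0 from by decide]
    ring
end
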